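/- For every integer k ≥ 1: the quotient of the dihedral group of order 2^{k+2} by its center is isomorphic to the dihedral group of order 2^{k+1} (in Mathlib terms, DihedralGroup (2^{k+1}) ⧸ center (DihedralGroup (2^{k+1})) ≃* DihedralGroup (2^k)); consequently the dihedral group of order 2^{k+1} is capable, and moreover its nilpotency class equals k. In particular, for p = 2 the bound α_r ≤ α_{r-1} + (k-1) from the necessary condition for capability is attained: the dihedral group of order 2^{k+1} is a capable 2-group of class k with a minimal generating set consisting of an element of order 2 and an element of order 2^k. -/

import Mathlib

universe u

/-- A group is capable if it is a central quotient `H/Z(H)` of some group `H`. -/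
def IsCapable (G : Type u) [Group G] : Prop :=
  ∃ (H : Type u) (_ : Group H), Nonempty ((H ⧸ Subgroup.center H) ≃* G)

namespace DihedralAux

open DihedralGroup Subgroup
open scoped commutatorElement

variable {m n : ℕ}

lemma inv_r (a : ZMod m) : (r a : DihedralGroup m)⁻¹ = r (-a) := rfl

lemma inv_sr (a : ZMod m) : (sr a : DihedralGroup m)⁻¹ = sr a := rfl

lemma r_zpow (c : ZMod m) (t : ℤ) : (r c : DihedralGroup m) ^ t = r ((t : ZMod m) * c) := by
  have hpow : ∀ s : ℕ, (r c : DihedralGroup m) ^ s = r ((s : ZMod m) * c) := by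
    intro s
    induction s with
    | zero => simp
    | succ s ih =>
      rw [pow_succ, ih, r_mul_r]
      push_cast
      ring_nf
  cases t with
  | ofNat s => simpa using hpow s
  | negSucc s =>
    rw [zpow_negSucc, hpow (s + 1), inv_r]
    congr 1
    push_cast
    ring

lemma commutator_r_r (a b : ZMod m) : ⁅(r a : DihedralGroup m), r b⁆ = 1 := by
  rw [commutatorElement_def, inv_r, inv_r, r_mul_r, r_mul_r, r_mul_r, one_def]
  congr 1
  ring

lemma commutator_r_sr (a b : ZMod m) : ⁅(r a : DihedralGroup m), sr b⁆ = r (2 * a) := by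
  rw [commutatorElement_def, inv_r, inv_sr, r_mul_sr, sr_mul_r, sr_mul_sr]
  congr 1
  ring

lemma commutator_sr_r (a b : ZMod m) : ⁅(sr a : DihedralGroup m), r b⁆ = r (2 * (-b)) := by
  rw [commutatorElement_def, inv_r, inv_sr, sr_mul_r, sr_mul_sr, r_mul_r]
  congr 1
  ring

lemma commutator_sr_sr (a b : ZMod m) : ⁅(sr a : DihedralGroup m), sr b⁆ = r (2 * (b - a)) := by
  rw [commutatorElement_def, inv_sr, inv_sr, sr_mul_sr, r_mul_sr, sr_mul_sr]
  congr 1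
  ring

lemma r_mem_zpowers [NeZero m] {c d : ZMod m} (x : ZMod m) (h : d = c * x) :
    (r d : DihedralGroup m) ∈ zpowers (r c) := by
  refine mem_zpowers_iff.mpr ⟨(x.val : ℤ), ?_⟩
  rw [r_zpow]
  congr 1
  push_cast [ZMod.natCast_zmod_val]
  rw [h, mul_comm]

lemma comm_zpowers_top [NeZero m] (c : ZMod m) :
    ⁅zpowers (r c : DihedralGroup m), (⊤ : Subgroup (DihedralGroup m))⁆ =
      zpowers (r (2 * c)) := by
  apply le_antisymm
  · rw [Subgroup.commutator_le]
    rintro g₁ hg₁ g₂ -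
    obtain ⟨t, rfl⟩ := Subgroup.mem_zpowers_iff.mp hg₁
    rw [r_zpow]
    rcases g₂ with b | b
    · rw [commutator_r_r]; exact one_mem _
    · rw [commutator_r_sr]
      exact r_mem_zpowers (t : ZMod m) (by ring)
  · rw [zpowers_eq_closure, closure_le, Set.singleton_subset_iff, SetLike.mem_coe,
      show (r (2 * c) : DihedralGroup m) = ⁅r c, sr 0⁆ from (commutator_r_sr c 0).symm]
    exact Subgroup.commutator_mem_commutator (Subgroup.mem_zpowers _) (Subgroup.mem_top _)

lemma top_comm_top [NeZero m] :
    ⁅(⊤ : Subgroup (DihedralGroup m)), ⊤⁆ = zpowers (r (2 : ZMod m)) := by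
  apply le_antisymm
  · rw [Subgroup.commutator_le]
    rintro g₁ - g₂ -
    rcases g₁ with a | a <;> rcases g₂ with b | b
    · rw [commutator_r_r]; exact one_mem _
    · rw [commutator_r_sr]; exact r_mem_zpowers a (by ring)
    · rw [commutator_sr_r]; exact r_mem_zpowers (-b) (by ring)
    · rw [commutator_sr_sr]; exact r_mem_zpowers (b - a) (by ring)
  · rw [zpowers_eq_closure, closure_le, Set.singleton_subset_iff, SetLike.mem_coe,
      show (r (2 : ZMod m) : DihedralGroup m) = ⁅r 1, sr 0⁆ by
        rw [commutator_r_sr, mul_one]]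
    exact Subgroup.commutator_mem_commutator (Subgroup.mem_top _) (Subgroup.mem_top _)

lemma lcs_eq [NeZero m] (i : ℕ) :
    (⊤ : Subgroup (DihedralGroup m)).lowerCentralSeries (i + 1) = zpowers (r ((2 : ZMod m) ^ (i + 1))) := by
  induction i with
  | zero =>
    rw [show (⊤ : Subgroup (DihedralGroup m)).lowerCentralSeries 1
        = ⁅(⊤ : Subgroup (DihedralGroup m)), ⊤⁆ from rfl, top_comm_top, pow_one]
  | succ i ih =>
    rw [show (⊤ : Subgroup (DihedralGroup m)).lowerCentralSeries (i + 2)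
        = ⁅(⊤ : Subgroup (DihedralGroup m)).lowerCentralSeries (i + 1), ⊤⁆ from rfl, ih, comm_zpowers_top]
    congr 2
    ring

/-- The canonical projection between dihedral groups, as a function. -/
def projFun (h : m ∣ n) : DihedralGroup n → DihedralGroup m
  | .r i => .r (ZMod.castHom h (ZMod m) i)
  | .sr i => .sr (ZMod.castHom h (ZMod m) i)

/-- The canonical projection between dihedral groups. -/
def proj (h : m ∣ n) : DihedralGroup n →* DihedralGroup m where
  toFun := projFun h
  map_one' := by
    show projFun h (.r 0) = 1
    rw [projFun, map_zero, one_def]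
  map_mul' := by
    rintro (a | a) (b | b) <;>
      simp only [r_mul_r, r_mul_sr, sr_mul_r, sr_mul_sr, projFun, map_add, map_sub]

lemma proj_surjective [NeZero m] (h : m ∣ n) : Function.Surjective (proj h) := by
  rintro (i | i)
  · exact ⟨.r (i.val : ZMod n), by
      show DihedralGroup.r _ = _
      rw [map_natCast, ZMod.natCast_zmod_val]⟩
  · exact ⟨.sr (i.val : ZMod n), by
      show DihedralGroup.sr _ = _
      rw [map_natCast, ZMod.natCast_zmod_val]⟩

lemma cast_eq_zero_iff [NeZero m] (h2 : n = 2 * m) (h : m ∣ n) (i : ZMod n) :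
    ZMod.castHom h (ZMod m) i = 0 ↔ i + i = 0 := by
  subst h2
  haveI : NeZero (2 * m) := ⟨by have := NeZero.pos m; omega⟩
  rw [← ZMod.natCast_zmod_val i, map_natCast, ZMod.natCast_eq_zero_iff,
    ← Nat.cast_add, ZMod.natCast_eq_zero_iff, ← two_mul]
  exact ⟨fun hd => mul_dvd_mul_left 2 hd, fun hd => (mul_dvd_mul_iff_left (two_ne_zero)).mp hd⟩

lemma center_eq (h : m ∣ n) (h2 : n = 2 * m) (hm : 1 < m) :
    Subgroup.center (DihedralGroup n) = MonoidHom.ker (proj h) := by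
  haveI : NeZero m := ⟨by omega⟩
  haveI : NeZero n := ⟨by omega⟩
  have h2ne : (2 : ZMod n) ≠ 0 := by
    have : ((2 : ℕ) : ZMod n) ≠ 0 := by
      rw [ne_eq, ZMod.natCast_eq_zero_iff]
      intro hd
      have := Nat.le_of_dvd (by norm_num) hd
      omega
    simpa using this
  ext x
  rw [Subgroup.mem_center_iff, MonoidHom.mem_ker]
  constructor
  · intro hx
    rcases x with i | i
    · have h1 := hx (sr 0)
      rw [sr_mul_r, r_mul_sr, zero_add, zero_sub] at h1
      have h2' : i = -i := by injection h1
      show projFun h (.r i) = 1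
      rw [projFun, one_def]
      congr 1
      rw [cast_eq_zero_iff h2 h]
      nth_rw 2 [h2']
      ring
    · exfalso
      have h1 := hx (r 1)
      rw [r_mul_sr, sr_mul_r] at h1
      have h2' : i - 1 = i + 1 := by injection h1
      exact h2ne (by linear_combination -h2')
  · intro hx
    rcases x with i | i
    · have hio : ZMod.castHom h (ZMod m) i = 0 := by
        have : projFun h (.r i) = 1 := hx
        rw [projFun, one_def] at this
        injection this
      rw [cast_eq_zero_iff h2 h] at hio
      have hneg : i = -i := by linear_combination hio
      intro g
      rcases g with j | j
      · rw [r_mul_r, r_mul_r, add_comm]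
      · rw [sr_mul_r, r_mul_sr, sub_eq_add_neg, ← hneg]
    · exfalso
      have : projFun h (.sr i) = 1 := hx
      rw [projFun, one_def] at this
      exact absurd this nofun

end DihedralAux

open DihedralGroup Subgroup DihedralAux in
/-- For every `k ≥ 1`, the central quotient of the dihedral group of order `2^{k+2}`
is the dihedral group of order `2^{k+1}`; hence the dihedral group of order `2^{k+1}`
is capable, has nilpotency class exactly `k`, and has a minimal generating set
consisting of an element of order `2` and an element of order `2^k`. -/
theorem dihedral_capable_class_k (k : ℕ) (hk : 1 ≤ k) :
    Nonempty ((DihedralGroup (2 ^ (k + 1)) ⧸ Subgroup.center (DihedralGroup (2 ^ (k + 1)))) ≃*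
        DihedralGroup (2 ^ k)) ∧
    IsCapable (DihedralGroup (2 ^ k)) ∧
    Subgroup.lowerCentralSeries (⊤ : Subgroup (DihedralGroup (2 ^ k))) k = ⊥ ∧
    Subgroup.lowerCentralSeries (⊤ : Subgroup (DihedralGroup (2 ^ k))) (k - 1) ≠ ⊥ ∧
    ∃ a b : DihedralGroup (2 ^ k), orderOf a = 2 ∧ orderOf b = 2 ^ k ∧
      Subgroup.closure ({a, b} : Set (DihedralGroup (2 ^ k))) = ⊤ ∧
      ∀ s : Set (DihedralGroup (2 ^ k)), s ⊂ {a, b} → Subgroup.closure s ≠ ⊤ := by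
  have hm : 1 < 2 ^ k := by
    calc 1 < 2 ^ 1 := by norm_num
    _ ≤ 2 ^ k := Nat.pow_le_pow_right (by norm_num) hk
  haveI : NeZero (2 ^ k) := ⟨by omega⟩
  have hdvd : 2 ^ k ∣ 2 ^ (k + 1) := pow_dvd_pow 2 (by omega)
  have h2 : 2 ^ (k + 1) = 2 * 2 ^ k := by rw [pow_succ, mul_comm]
  -- the equivalence
  have hequiv : Nonempty
      ((DihedralGroup (2 ^ (k + 1)) ⧸ Subgroup.center (DihedralGroup (2 ^ (k + 1)))) ≃*
        DihedralGroup (2 ^ k)) :=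
    ⟨(QuotientGroup.quotientMulEquivOfEq (center_eq hdvd h2 hm)).trans
      (QuotientGroup.quotientKerEquivOfSurjective _ (proj_surjective hdvd))⟩
  refine ⟨hequiv, ⟨DihedralGroup (2 ^ (k + 1)), inferInstance, hequiv⟩, ?_, ?_, ?_⟩
  · -- lcs k = ⊥
    obtain ⟨j, rfl⟩ : ∃ j, k = j + 1 := ⟨k - 1, by omega⟩
    rw [lcs_eq j]
    have : (2 : ZMod (2 ^ (j + 1))) ^ (j + 1) = 0 := by
      have : (((2 : ℕ) ^ (j + 1) : ℕ) : ZMod (2 ^ (j + 1))) = 0 := ZMod.natCast_self _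
      push_cast at this
      exact this
    rw [this, ← one_def]
    exact Subgroup.zpowers_one_eq_bot
  · -- lcs (k - 1) ≠ ⊥
    rcases eq_or_lt_of_le hk with h1 | h1
    · rw [← h1]
      simp only [Nat.sub_self, Subgroup.lowerCentralSeries_zero]
      intro h
      have hmem : (sr 0 : DihedralGroup (2 ^ 1)) ∈ (⊥ : Subgroup _) := h ▸ Subgroup.mem_top _
      rw [Subgroup.mem_bot, one_def] at hmem
      exact absurd hmem nofun
    · obtain ⟨j, rfl⟩ : ∃ j, k = j + 2 := ⟨k - 2, by omega⟩
      rw [show j + 2 - 1 = j + 1 from rfl, lcs_eq j]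
      intro hbot
      rw [Subgroup.zpowers_eq_bot, one_def] at hbot
      have hc : (2 : ZMod (2 ^ (j + 2))) ^ (j + 1) = 0 := by injection hbot
      have hc' : (((2 : ℕ) ^ (j + 1) : ℕ) : ZMod (2 ^ (j + 2))) = 0 := by
        push_cast
        exact hc
      rw [ZMod.natCast_eq_zero_iff] at hc'
      have hle := Nat.le_of_dvd (Nat.pow_pos (by norm_num)) hc'
      have hlt : (2 : ℕ) ^ (j + 1) < 2 ^ (j + 2) := Nat.pow_lt_pow_right (by norm_num) (by omega)
      omega
  · -- minimal generating set
    refine ⟨sr 0, r 1, orderOf_sr 0, orderOf_r_one, ?_, ?_⟩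
    · rw [eq_top_iff]
      rintro (i | i) -
      · have : (r i : DihedralGroup (2 ^ k)) = (r 1) ^ i.val := by
          rw [r_one_pow, ZMod.natCast_zmod_val]
        rw [this]
        exact pow_mem (subset_closure (by simp)) _
      · have : (sr i : DihedralGroup (2 ^ k)) = sr 0 * (r 1) ^ i.val := by
          rw [r_one_pow, ZMod.natCast_zmod_val, sr_mul_r, zero_add]
        rw [this]
        exact mul_mem (subset_closure (by simp)) (pow_mem (subset_closure (by simp)) _)
    · intro s hs htop
      haveI : Fact (1 < 2 ^ k) := ⟨hm⟩
      have hsub := hs.1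
      have hne : ¬ ({sr 0, r 1} : Set (DihedralGroup (2 ^ k))) ⊆ s := hs.2
      have : (sr 0 : DihedralGroup (2 ^ k)) ∉ s ∨ (r 1 : DihedralGroup (2 ^ k)) ∉ s := by
        by_contra hcon
        push_neg at hcon
        exact hne (by rintro x (rfl | rfl) <;> [exact hcon.1; exact hcon.2])
      rcases this with ha | hb
      · -- s ⊆ {r 1}, so sr 0 ∉ closure s
        have hss : s ⊆ {(r 1 : DihedralGroup (2 ^ k))} := by
          intro x hx
          rcases hsub hx with rfl | rfl
          · exact absurd hx ha
          · rfl
        have hle : Subgroup.closure s ≤ zpowers (r 1 : DihedralGroup (2 ^ k)) := by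
          rw [zpowers_eq_closure]
          exact Subgroup.closure_mono hss
        have : (sr 0 : DihedralGroup (2 ^ k)) ∈ zpowers (r 1) :=
          hle (htop ▸ Subgroup.mem_top _)
        obtain ⟨t, ht⟩ := Subgroup.mem_zpowers_iff.mp this
        rw [DihedralAux.r_zpow] at ht
        exact absurd ht (by simp)
      · -- s ⊆ {sr 0}, so r 1 ∉ closure s
        have hss : s ⊆ {(sr 0 : DihedralGroup (2 ^ k))} := by
          intro x hx
          rcases hsub hx with rfl | rfl
          · rfl
          · exact absurd hx hb
        have hle : Subgroup.closure s ≤ zpowers (sr 0 : DihedralGroup (2 ^ k)) := by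
          rw [zpowers_eq_closure]
          exact Subgroup.closure_mono hss
        have hmem : (r 1 : DihedralGroup (2 ^ k)) ∈ zpowers (sr 0) :=
          hle (htop ▸ Subgroup.mem_top _)
        obtain ⟨t, ht⟩ := Subgroup.mem_zpowers_iff.mp hmem
        rw [← zpow_mod_orderOf, orderOf_sr, show ((2:ℕ):ℤ) = 2 from rfl] at ht
        rcases Int.emod_two_eq t with he | he <;> rw [he] at ht
        · rw [zpow_zero, one_def] at ht
          have : (0 : ZMod (2 ^ k)) = 1 := by injection ht
          exact absurd this.symm one_ne_zero
        · rw [zpow_one] at ht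
          exact absurd ht (by simp)
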